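/- Let n, d be positive integers, y : Fin n → ℝ, x : Fin n → Fin (d+1) → ℝ, p : Fin (d+1) → ℝ, and q ∈ ℝ. Then the second-order truncation of the logistic log-likelihood, namely n·((q−1) − (1/2)(q−1)²) + ∑_{i} (y_i q − ∑_{j=0}^{d} p_j x_{ij}) − 2 ∑_{i} (log 2 + (1/2)(y_i q − ∑_{j=0}^{d} p_j x_{ij}) + (1/8)(y_i q − ∑_{j=0}^{d} p_j x_{ij})²), is identically equal to −n(3/2 + 2 log 2) + 2nq − (n/2 + (1/4) ∑_i y_i²) q² + (1/2) ∑_i ∑_{j=0}^{d} y_i x_{ij} p_j q − (1/4) ∑_i ∑_{j=0}^{d} x_{ij}² p_j² − (1/4) ∑_i ∑_{j=0}^{d} ∑_{h=0, h≠j}^{d} x_{ij} x_{ih} p_j p_h. -/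
import Mathlib


open Finset

lemma sq_sum_expand {m : ℕ} (f : Fin m → ℝ) :
    (∑ j, f j) ^ 2
      = ∑ j, f j ^ 2 + ∑ j, ∑ h ∈ Finset.univ.erase j, f j * f h := by
  rw [sq, Finset.sum_mul_sum, ← Finset.sum_add_distrib]
  refine Finset.sum_congr rfl fun j _ => ?_
  rw [← Finset.add_sum_erase _ (fun h => f j * f h) (Finset.mem_univ j), sq]

/-- Proposition 4: second-order Taylor truncation of the logistic
log-likelihood. -/
theorem logistic_taylor_truncation (n d : ℕ) (hn : 0 < n) (hd : 0 < d)
    (y : Fin n → ℝ) (x : Fin n → Fin (d + 1) → ℝ)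
    (p : Fin (d + 1) → ℝ) (q : ℝ) :
    (n : ℝ) * ((q - 1) - (1 / 2) * (q - 1) ^ 2)
      + ∑ i, (y i * q - ∑ j, p j * x i j)
      - 2 * ∑ i, (Real.log 2 + (1 / 2) * (y i * q - ∑ j, p j * x i j)
          + (1 / 8) * (y i * q - ∑ j, p j * x i j) ^ 2)
    = -(n : ℝ) * (3 / 2 + 2 * Real.log 2) + 2 * (n : ℝ) * q
      - ((n : ℝ) / 2 + (1 / 4) * ∑ i, (y i) ^ 2) * q ^ 2
      + (1 / 2) * ∑ i, ∑ j, y i * x i j * p j * q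
      - (1 / 4) * ∑ i, ∑ j, (x i j) ^ 2 * (p j) ^ 2
      - (1 / 4) * ∑ i, ∑ j, ∑ h ∈ Finset.univ.erase j, x i j * x i h * p j * p h := by
  have key : ∀ i, (y i * q - ∑ j, p j * x i j) ^ 2
      = y i ^ 2 * q ^ 2 - 2 * ∑ j, y i * x i j * p j * q
        + (∑ j, x i j ^ 2 * p j ^ 2
          + ∑ j, ∑ h ∈ Finset.univ.erase j, x i j * x i h * p j * p h) := by
    intro i
    have h1 := sq_sum_expand (fun j => p j * x i j)
    have h2 : ∑ j, (p j * x i j) ^ 2 = ∑ j, x i j ^ 2 * p j ^ 2 := by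
      refine Finset.sum_congr rfl fun j _ => by ring
    have h3 : ∑ j, ∑ h ∈ Finset.univ.erase j, (p j * x i j) * (p h * x i h)
        = ∑ j, ∑ h ∈ Finset.univ.erase j, x i j * x i h * p j * p h := by
      refine Finset.sum_congr rfl fun j _ => Finset.sum_congr rfl fun h _ => by ring
    have h4 : ∑ j, y i * x i j * p j * q = y i * q * ∑ j, p j * x i j := by
      rw [Finset.mul_sum]
      refine Finset.sum_congr rfl fun j _ => by ring
    rw [sub_sq, h4, h1, h2, h3]
    ring
  have h5 : ∀ i, Real.log 2 + (1 / 2) * (y i * q - ∑ j, p j * x i j)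
      + (1 / 8) * (y i * q - ∑ j, p j * x i j) ^ 2
      = Real.log 2 + (1 / 2) * (y i * q) - (1 / 2) * ∑ j, p j * x i j
        + (1 / 8) * (y i ^ 2 * q ^ 2) - (1 / 4) * ∑ j, y i * x i j * p j * q
        + (1 / 8) * ∑ j, x i j ^ 2 * p j ^ 2
        + (1 / 8) * ∑ j, ∑ h ∈ Finset.univ.erase j, x i j * x i h * p j * p h := by
    intro i; rw [key i]; ring
  simp only [h5, Finset.sum_add_distrib, Finset.sum_sub_distrib, Finset.sum_const,
    Finset.card_univ, Fintype.card_fin, nsmul_eq_mul, ← Finset.mul_sum, ← Finset.sum_mul]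
  ring
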